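/- For any cyclic abelian group A, the third super-Lie functor vanishes: 𝓛ₛ³(A) = 0. -/

import Mathlib

open TensorProduct

/-- The third super-Lie functor `𝓛ₛ³(A)`: the subgroup of `A ⊗ A ⊗ A` which is the image of the
endomorphism `l(a⊗b⊗c) = a⊗b⊗c + b⊗a⊗c - c⊗a⊗b - c⊗b⊗a`, i.e. the subgroup generated by the
elements `{a,b,c} = a⊗b⊗c + b⊗a⊗c - c⊗a⊗b - c⊗b⊗a`. -/
noncomputable def Ls3 (A : Type) [AddCommGroup A] : AddSubgroup (A ⊗[ℤ] (A ⊗[ℤ] A)) :=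
  AddSubgroup.closure {x | ∃ a b c : A,
    x = a ⊗ₜ[ℤ] (b ⊗ₜ[ℤ] c) + b ⊗ₜ[ℤ] (a ⊗ₜ[ℤ] c)
      - c ⊗ₜ[ℤ] (a ⊗ₜ[ℤ] b) - c ⊗ₜ[ℤ] (b ⊗ₜ[ℤ] a)}

lemma tmul_zsmul3 (A : Type) [AddCommGroup A] (g : A) (m n p : ℤ) :
    (m • g) ⊗ₜ[ℤ] ((n • g) ⊗ₜ[ℤ] (p • g)) = (m * n * p) • (g ⊗ₜ[ℤ] (g ⊗ₜ[ℤ] g)) := by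
  simp only [← TensorProduct.smul_tmul', TensorProduct.tmul_smul, smul_smul]
  ring_nf
  rw [show ∀ (k : ℤ) (y : A ⊗[ℤ] A), g ⊗ₜ[ℤ] (k • y) = k • (g ⊗ₜ[ℤ] y) from
    fun k y => map_zsmul (TensorProduct.mk ℤ A (A ⊗[ℤ] A) g) k y, smul_smul]
  ring_nf

/-- For any cyclic abelian group `A`, the third super-Lie functor vanishes:
`𝓛ₛ³(A) = 0`. -/
theorem ls3_of_cyclic (A : Type) [AddCommGroup A] [IsAddCyclic A] : Ls3 A = ⊥ := by
  obtain ⟨g, hg⟩ := IsAddCyclic.exists_generator (α := A)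
  apply le_antisymm _ bot_le
  rw [Ls3, AddSubgroup.closure_le]
  rintro x ⟨a, b, c, rfl⟩
  obtain ⟨m, rfl⟩ := hg a
  obtain ⟨n, rfl⟩ := hg b
  obtain ⟨p, rfl⟩ := hg c
  simp only [tmul_zsmul3, SetLike.mem_coe, AddSubgroup.mem_bot]
  rw [← add_smul, ← sub_smul, ← sub_smul]
  ring_nf
  simp
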